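/- Let g be a Lie triple system over a field F with char F ≠ 2, 3 and N : g → g a Nijenhuis operator. Then for every polynomial P(X) = c1·X + c2·X² + ... + cn·X^n with coefficients ci ∈ F and zero constant term, the operator P(N) = c1·N + c2·N² + ... + cn·N^n is a Nijenhuis operator. -/

import Mathlib

/-- `N` is a Nijenhuis operator for the Lie triple system bracket `t`. -/
def IsNijenhuis {F : Type*} [Field F] {g : Type*} [AddCommGroup g] [Module F g]
    (t : g →ₗ[F] g →ₗ[F] g →ₗ[F] g) (N : Module.End F g) : Prop :=
  (∀ x y z : g, t (N x) (N y) (N z) = 0) ∧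
  (∀ x y z : g,
    N (N (t x y z)) =
      N (t (N x) y z) + N (t x (N y) z) + N (t x y (N z)) -
        t (N x) (N y) z - t (N x) y (N z) - t x (N y) (N z))


namespace NijAux
variable {F : Type*} [Field F] {g : Type*} [AddCommGroup g] [Module F g]
variable (t : g →ₗ[F] g →ₗ[F] g →ₗ[F] g) (N : Module.End F g)

def N2cond : Prop := ∀ x y z : g,
    N (N (t x y z)) =
      N (t (N x) y z) + N (t x (N y) z) + N (t x y (N z)) -
        t (N x) (N y) z - t (N x) y (N z) - t x (N y) (N z)

def ff (a b c : ℕ) (x y z : g) : g := t ((N^a) x) ((N^b) y) ((N^c) z)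

lemma np (k : ℕ) (u : g) : N ((N^k) u) = (N^(k+1)) u := by
  rw [pow_succ', Module.End.mul_apply]

lemma vanish (hN1 : ∀ x y z : g, t (N x) (N y) (N z) = 0)
    (a b c : ℕ) (x y z : g) : ff t N (a+1) (b+1) (c+1) x y z = 0 := by
  simp only [ff, ← np]; exact hN1 _ _ _

lemma relR (hN2 : N2cond t N) (a b c : ℕ) (x y z : g) :
    N (N (ff t N a b c x y z)) =
      N (ff t N (a+1) b c x y z) + N (ff t N a (b+1) c x y z) + N (ff t N a b (c+1) x y z)
      - ff t N (a+1) (b+1) c x y z - ff t N (a+1) b (c+1) x y z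
      - ff t N a (b+1) (c+1) x y z := by
  have h := hN2 ((N^a) x) ((N^b) y) ((N^c) z)
  simpa only [ff, np] using h

def s1 (n : ℕ) (x y z : g) : g :=
  ff t N n 0 0 x y z + ff t N 0 n 0 x y z + ff t N 0 0 n x y z

def s2 (m n : ℕ) (x y z : g) : g :=
  ff t N m n 0 x y z + ff t N m 0 n x y z + ff t N 0 m n x y z

lemma relA (hN1 : ∀ x y z : g, t (N x) (N y) (N z) = 0) (hN2 : N2cond t N)
    (n : ℕ) (x y z : g) :
    N (N (s1 t N (n+1) x y z)) =
      N (s1 t N (n+1+1) x y z)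
      + N (s2 t N (n+1) 1 x y z + s2 t N 1 (n+1) x y z)
      - (s2 t N (n+1+1) 1 x y z + s2 t N 1 (n+1+1) x y z) := by
  have h1 := relR t N hN2 (n+1) 0 0 x y z
  have h2 := relR t N hN2 0 (n+1) 0 x y z
  have h3 := relR t N hN2 0 0 (n+1) x y z
  have v1 := vanish t N hN1 n 0 0 x y z
  have v2 := vanish t N hN1 0 n 0 x y z
  have v3 := vanish t N hN1 0 0 n x y z
  simp only [zero_add] at h1 h2 h3 v1 v2 v3
  simp only [s1, s2, map_add, zero_add]
  linear_combination (norm := module) h1 + h2 + h3 - v1 - v2 - v3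

end NijAux

namespace NijAux
variable {F : Type*} [Field F] {g : Type*} [AddCommGroup g] [Module F g]
variable (t : g →ₗ[F] g →ₗ[F] g →ₗ[F] g) (N : Module.End F g)

lemma relC (hN1 : ∀ x y z : g, t (N x) (N y) (N z) = 0) (hN2 : N2cond t N)
    (m n : ℕ) (x y z : g) :
    N (N (s2 t N (m+1) (n+1) x y z + s2 t N (n+1) (m+1) x y z)) =
      N (s2 t N (m+1+1) (n+1) x y z + s2 t N (n+1) (m+1+1) x y z
        + s2 t N (m+1) (n+1+1) x y z + s2 t N (n+1+1) (m+1) x y z)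
      - (s2 t N (m+1+1) (n+1+1) x y z + s2 t N (n+1+1) (m+1+1) x y z) := by
  have h1 := relR t N hN2 (m+1) (n+1) 0 x y z
  have h2 := relR t N hN2 (n+1) (m+1) 0 x y z
  have h3 := relR t N hN2 (m+1) 0 (n+1) x y z
  have h4 := relR t N hN2 (n+1) 0 (m+1) x y z
  have h5 := relR t N hN2 0 (m+1) (n+1) x y z
  have h6 := relR t N hN2 0 (n+1) (m+1) x y z
  have v1 := vanish t N hN1 m n 0 x y z
  have v2 := vanish t N hN1 (m+1) n 0 x y z
  have v3 := vanish t N hN1 m (n+1) 0 x y z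
  have v4 := vanish t N hN1 n m 0 x y z
  have v5 := vanish t N hN1 (n+1) m 0 x y z
  have v6 := vanish t N hN1 n (m+1) 0 x y z
  have w1 := vanish t N hN1 m 0 n x y z
  have w2 := vanish t N hN1 (m+1) 0 n x y z
  have w3 := vanish t N hN1 m 0 (n+1) x y z
  have w4 := vanish t N hN1 n 0 m x y z
  have w5 := vanish t N hN1 (n+1) 0 m x y z
  have w6 := vanish t N hN1 n 0 (m+1) x y z
  have u1 := vanish t N hN1 0 m n x y z
  have u2 := vanish t N hN1 0 (m+1) n x y z
  have u3 := vanish t N hN1 0 m (n+1) x y z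
  have u4 := vanish t N hN1 0 n m x y z
  have u5 := vanish t N hN1 0 (n+1) m x y z
  have u6 := vanish t N hN1 0 n (m+1) x y z
  simp only [zero_add] at h1 h2 h3 h4 h5 h6 v1 v2 v3 v4 v5 v6 w1 w2 w3 w4 w5 w6 u1 u2 u3 u4 u5 u6
  simp only [v1, v2, v3, v4, v5, v6, w1, w2, w3, w4, w5, w6, u1, u2, u3, u4, u5, u6,
    map_zero, add_zero, zero_add, sub_zero] at h1 h2 h3 h4 h5 h6
  simp only [s1, s2, map_add]
  linear_combination (norm := module) h1 + h2 + h3 + h4 + h5 + h6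

end NijAux

namespace NijAux
variable {F : Type*} [Field F] {g : Type*} [AddCommGroup g] [Module F g]
variable (t : g →ₗ[F] g →ₗ[F] g →ₗ[F] g) (N : Module.End F g)

lemma relK (hN1 : ∀ x y z : g, t (N x) (N y) (N z) = 0) (hN2 : N2cond t N)
    (m n : ℕ) (x y z : g) :
    (N^(n+1)) (s1 t N (m+1+1) x y z) - (N^(n+1+1)) (s1 t N (m+1) x y z)
      = (s2 t N (m+1+1) (n+1) x y z + s2 t N (n+1) (m+1+1) x y z)
        - N (s2 t N (m+1) (n+1) x y z + s2 t N (n+1) (m+1) x y z) := by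
  induction n with
  | zero =>
    have hA := relA t N hN1 hN2 m x y z
    simp only [zero_add, ← np, pow_one, map_add] at hA ⊢
    linear_combination (norm := module) -hA
  | succ n ih =>
    have hih := congrArg (⇑N) ih
    have hC := relC t N hN1 hN2 m n x y z
    simp only [map_sub, map_add, np] at hih hC
    simp only [map_add]
    linear_combination (norm := module) hih - hC
end NijAux

namespace NijAux
variable {F : Type*} [Field F] {g : Type*} [AddCommGroup g] [Module F g]
variable (t : g →ₗ[F] g →ₗ[F] g →ₗ[F] g) (N : Module.End F g)

def Gstmt (m n : ℕ) (x y z : g) : Prop :=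
  (N^(m+1)) (s1 t N (n+1) x y z) + (N^(n+1)) (s1 t N (m+1) x y z)
    - (s2 t N (m+1) (n+1) x y z + s2 t N (n+1) (m+1) x y z)
  = (N^(m+1+(n+1))) (ff t N 0 0 0 x y z) + (N^(m+1+(n+1))) (ff t N 0 0 0 x y z)

lemma Gstep (hN1 : ∀ x y z : g, t (N x) (N y) (N z) = 0) (hN2 : N2cond t N)
    (m n : ℕ) (x y z : g) (ih : Gstmt t N m n x y z) : Gstmt t N (m+1) n x y z := by
  unfold Gstmt at ih ⊢
  have hih := congrArg (⇑N) ih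
  have hk := relK t N hN1 hN2 m n x y z
  simp only [map_sub, map_add, np] at hih hk
  have e : m+1+(n+1)+1 = m+1+1+(n+1) := by omega
  rw [e] at hih
  linear_combination (norm := module) hih + hk

lemma relGa (hN1 : ∀ x y z : g, t (N x) (N y) (N z) = 0) (hN2 : N2cond t N)
    (m : ℕ) (x y z : g) : Gstmt t N m 0 x y z := by
  induction m with
  | zero =>
    unfold Gstmt
    have h := relR t N hN2 0 0 0 x y z
    simp only [zero_add, pow_one, s1, s2, map_add, ← np, pow_zero, Module.End.one_apply]
    simp only [zero_add] at h
    linear_combination (norm := module) -h - h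
  | succ m ih => exact Gstep t N hN1 hN2 m 0 x y z ih

lemma relG (hN1 : ∀ x y z : g, t (N x) (N y) (N z) = 0) (hN2 : N2cond t N)
    (m n : ℕ) (x y z : g) : Gstmt t N m n x y z := by
  induction m with
  | zero =>
    have h := relGa t N hN1 hN2 n x y z
    unfold Gstmt at h ⊢
    have e : n+1+(0+1) = 0+1+(n+1) := by omega
    rw [e] at h
    linear_combination (norm := module) h
  | succ m ih => exact Gstep t N hN1 hN2 m n x y z ih
end NijAux

namespace NijAux
variable {F : Type*} [Field F] {g : Type*} [AddCommGroup g] [Module F g]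
variable (t : g →ₗ[F] g →ₗ[F] g →ₗ[F] g) (N : Module.End F g)

/-- the polarized (mixed) form of the second Nijenhuis identity -/
def Mixed (A B : Module.End F g) : Prop := ∀ x y z : g,
  A (B (t x y z)) + B (A (t x y z)) =
    A (t (B x) y z + t x (B y) z + t x y (B z))
    + B (t (A x) y z + t x (A y) z + t x y (A z))
    - (t (A x) (B y) z + t (A x) y (B z) + t x (A y) (B z)
       + (t (B x) (A y) z + t (B x) y (A z) + t x (B y) (A z)))

lemma npp (a b : ℕ) (u : g) : (N^a) ((N^b) u) = (N^(a+b)) u := by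
  rw [pow_add, Module.End.mul_apply]

lemma mixed_pow (hN1 : ∀ x y z : g, t (N x) (N y) (N z) = 0) (hN2 : N2cond t N)
    (m n : ℕ) : Mixed t (N^(m+1)) (N^(n+1)) := by
  intro x y z
  have h := relG t N hN1 hN2 m n x y z
  unfold Gstmt at h
  simp only [s1, s2, ff, pow_zero, Module.End.one_apply, map_add] at h
  simp only [npp, map_add]
  have e : n+1+(m+1) = m+1+(n+1) := by omega
  rw [e]
  linear_combination (norm := module) -h

lemma mixed_comm {A B : Module.End F g} (h : Mixed t A B) : Mixed t B A := by
  intro x y z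
  linear_combination (norm := module) h x y z

lemma mixed_zero (B : Module.End F g) : Mixed t 0 B := by
  intro x y z
  simp [Mixed, LinearMap.zero_apply, map_zero]

lemma mixed_add_left {A A' B : Module.End F g} (h : Mixed t A B) (h' : Mixed t A' B) :
    Mixed t (A + A') B := by
  intro x y z
  have h1 := h x y z
  have h2 := h' x y z
  simp only [map_add] at h1 h2
  simp only [LinearMap.add_apply, map_add]
  linear_combination (norm := module) h1 + h2

lemma mixed_smul_left (c : F) {A B : Module.End F g} (h : Mixed t A B) :
    Mixed t (c • A) B := by
  intro x y z
  have h1 := h x y z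
  simp only [map_add] at h1
  simp only [LinearMap.smul_apply, map_smul, LinearMap.map_smul₂, map_add]
  linear_combination (norm := module) c • h1

lemma poly_mem (q : Module.End F g → Prop) (h0 : q 0)
    (hadd : ∀ (A A' : Module.End F g), q A → q A' → q (A + A'))
    (hsmul : ∀ (c : F) (A : Module.End F g), q A → q (c • A))
    (hpow : ∀ k : ℕ, q (N^(k+1)))
    (P : Polynomial F) (hP : P.coeff 0 = 0) : q (Polynomial.aeval N P) := by
  rw [Polynomial.aeval_eq_sum_range]
  apply Finset.sum_induction _ q (fun a b ha hb => hadd a b ha hb) h0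
  intro i _
  match i with
  | 0 => simpa [hP] using h0
  | (k+1) => exact hsmul _ _ (hpow k)

lemma mixed_aeval (hN1 : ∀ x y z : g, t (N x) (N y) (N z) = 0) (hN2 : N2cond t N)
    (P Q : Polynomial F) (hP : P.coeff 0 = 0) (hQ : Q.coeff 0 = 0) :
    Mixed t (Polynomial.aeval N P) (Polynomial.aeval N Q) := by
  apply poly_mem N (fun A => Mixed t A (Polynomial.aeval N Q))
    (mixed_zero t _) (fun A A' h h' => mixed_add_left t h h')
    (fun c A h => mixed_smul_left t c h) _ P hP
  intro k
  apply mixed_comm t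
  apply poly_mem N (fun B => Mixed t B (N^(k+1)))
    (mixed_zero t _) (fun A A' h h' => mixed_add_left t h h')
    (fun c A h => mixed_smul_left t c h) _ Q hQ
  intro j
  exact mixed_pow t N hN1 hN2 j k

end NijAux




/- STATEMENT 13: for a Nijenhuis operator N and any polynomial P with zero constant
term, the operator P(N) is also a Nijenhuis operator. -/
theorem nijenhuis_polynomial {F : Type*} [Field F]
    (hchar2 : (2 : F) ≠ 0) (hchar3 : (3 : F) ≠ 0)
    {g : Type*} [AddCommGroup g] [Module F g]
    (t : g →ₗ[F] g →ₗ[F] g →ₗ[F] g)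
    (hskew : ∀ x y : g, t x x y = 0)
    (hjac : ∀ x y z : g, t x y z + t y z x + t z x y = 0)
    (hfund : ∀ x y a b c : g,
      t x y (t a b c) = t (t x y a) b c + t a (t x y b) c + t a b (t x y c))
    (N : Module.End F g) (hN : IsNijenhuis t N) :
    ∀ P : Polynomial F, P.coeff 0 = 0 → IsNijenhuis t (Polynomial.aeval N P) := by
  obtain ⟨hN1, hN2⟩ := hN
  intro P hP
  set A : Module.End F g := Polynomial.aeval N P with hA
  have hPX : P = Polynomial.X * P.divX := by
    conv_lhs => rw [← Polynomial.divX_mul_X_add P]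
    rw [hP, map_zero, add_zero, mul_comm]
  have hAform : A = N * Polynomial.aeval N P.divX := by
    rw [hA]
    conv_lhs => rw [hPX]
    rw [map_mul, Polynomial.aeval_X]
  constructor
  · intro x y z
    rw [hAform]
    simp only [Module.End.mul_apply]
    exact hN1 _ _ _
  · intro x y z
    have hmix := NijAux.mixed_aeval t N hN1 hN2 P P hP hP x y z
    rw [← hA] at hmix
    -- hmix : A (A f) + A (A f) = (2 copies of RHS)
    have key : A (A (t x y z)) =
        A (t (A x) y z + t x (A y) z + t x y (A z))
        - (t (A x) (A y) z + t (A x) y (A z) + t x (A y) (A z)) := by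
      have h2 : (2:F) • (A (A (t x y z))) =
          (2:F) • (A (t (A x) y z + t x (A y) z + t x y (A z))
            - (t (A x) (A y) z + t (A x) y (A z) + t x (A y) (A z))) := by
        rw [two_smul, two_smul]
        linear_combination (norm := module) hmix
      calc A (A (t x y z)) = (2:F)⁻¹ • ((2:F) • (A (A (t x y z)))) :=
            (inv_smul_smul₀ hchar2 _).symm
        _ = (2:F)⁻¹ • ((2:F) • (A (t (A x) y z + t x (A y) z + t x y (A z))
            - (t (A x) (A y) z + t (A x) y (A z) + t x (A y) (A z)))) := by rw [h2]
        _ = _ := inv_smul_smul₀ hchar2 _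
    rw [key]
    simp only [map_add]
    abel
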